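/- arXiv:2404.16741 — 2 statements merged into one kernel-verified Lean document; each statement's English description precedes it below -/
import Mathlib

section
/- Every YES-instance (D,K,T) of MD-RSPP has a solution path cover (Q_κ)_{κ∈K} with the following property: writing Q(v) = {κ ∈ K : v lies on Q_κ} for each vertex v, any two distinct vertices u and v that each lie on at least one path of the cover and are not the source of any commodity in K satisfy Q(u) ≠ Q(v). -/
open Relation

set_option linter.unusedSectionVars false
variable {V : Type*} [DecidableEq V]

/-- The adjacency relation of a digraph given by its edge set. -/
def Adj (E : Finset (V × V)) : V → V → Prop := fun a b => (a, b) ∈ E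

/-- `D` is a digraph: no self-loops (no parallel edges since edges form a set). -/
def IsDigraph (D : Finset (V × V)) : Prop := ∀ e ∈ D, e.1 ≠ e.2

/-- `l` is a directed `s`-`t`-path w.r.t. the adjacency relation `A`:
a nonempty duplicate-free list of vertices, consecutive ones adjacent,
starting at `s` and ending at `t`. -/
def DiPath (A : V → V → Prop) (s t : V) (l : List V) : Prop :=
  l.Chain' A ∧ l.Nodup ∧ l.head? = some s ∧ l.getLast? = some t

/-- Adjacency in the transitive closure `T(D)` of the digraph with edge set `E`:
`(u,v)` is an edge iff `u ≠ v` and `v` is reachable from `u` in `E`. -/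
def TCAdj (E : Finset (V × V)) (u v : V) : Prop :=
  u ≠ v ∧ Relation.ReflTransGen (Adj E) u v

/-- The outdegree of `v` in the digraph with edge set `H`. -/
def outDeg (H : Finset (V × V)) (v : V) : ℕ :=
  (H.filter fun e => e.1 = v).card

/-- The list of (directed) edges traversed by a list of vertices. -/
def listEdges (l : List V) : List (V × V) := l.zip l.tail

/-- `H` is a solution graph of the MD-RSPP instance `(D,K,T)`: a subgraph of
`T(D)` of maximum outdegree at most `T` containing a directed `s`-`t`-path for
every commodity `(s,t) ∈ K`. -/
def RSPPSolution (D K : Finset (V × V)) (T : ℕ) (H : Finset (V × V)) : Prop :=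
  (∀ e ∈ H, TCAdj D e.1 e.2) ∧ (∀ v, outDeg H v ≤ T) ∧
  (∀ k ∈ K, ∃ l, DiPath (Adj H) k.1 k.2 l)

lemma listEdges_cons_cons (a b : V) (t : List V) :
    listEdges (a::b::t) = (a,b) :: listEdges (b::t) := rfl

lemma mem_listEdges {p : V×V} {l : List V} (h : p ∈ listEdges l) :
    p.1 ∈ l ∧ p.2 ∈ l.tail := by
  obtain ⟨a, b⟩ := p
  exact List.of_mem_zip h

lemma chain'_iff_listEdges {R : V → V → Prop} {l : List V} :
    l.Chain' R ↔ ∀ p ∈ listEdges l, R p.1 p.2 := by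
  induction l with
  | nil => simp [listEdges]; exact List.isChain_nil
  | cons a t ih =>
    cases t with
    | nil => simp [listEdges]; exact List.isChain_singleton _
    | cons b t' =>
      unfold List.Chain' at ih ⊢
      rw [List.isChain_cons_cons, listEdges_cons_cons, ih]
      simp

lemma listEdges_append_cons (A : List V) (b : V) (C : List V) :
    listEdges (A ++ b :: C) = listEdges (A ++ [b]) ++ listEdges (b :: C) := by
  induction A with
  | nil => simp [listEdges]
  | cons a A' ih =>
    cases A' with
    | nil => cases C <;> simp [listEdges_cons_cons, listEdges]
    | cons a2 A'' =>
      simp only [List.cons_append, listEdges_cons_cons] at *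
      rw [ih]

lemma listEdges_concat_cons (A : List V) (a x : V) (C : List V) :
    listEdges ((A ++ [a]) ++ x :: C) = listEdges (A ++ [a]) ++ (a,x) :: listEdges (x::C) := by
  have h1 := listEdges_append_cons (A ++ [a]) x C
  have h2 : listEdges (A ++ [a] ++ [x]) = listEdges (A ++ [a]) ++ [(a,x)] := by
    have := listEdges_append_cons A a [x]
    simpa [listEdges_cons_cons, listEdges] using this
  rw [h1, h2]
  simp

lemma chain'_reflTransGen {D : Finset (V×V)} {x : V} {m : List V}
    (h : (x::m).Chain' (TCAdj D)) {y : V} (hy : y ∈ x::m) :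
    ReflTransGen (Adj D) x y := by
  induction m generalizing x with
  | nil => simp at hy; subst hy; exact ReflTransGen.refl
  | cons b t ih =>
    rcases List.mem_cons.mp hy with rfl | hy'
    · exact ReflTransGen.refl
    · unfold List.Chain' at h
      rw [List.isChain_cons_cons] at h
      exact ReflTransGen.trans h.1.2 (ih h.2 hy')

/-- Core surgery lemma: given a TCAdj-path visiting `u` (earlier) and `v` (later),
we can excise the stretch from `u` up to just before `v`. -/
lemma core_surgery {D : Finset (V×V)} {s t u v : V} {A₀ M Z : List V} {a : V}
    (hpath : DiPath (TCAdj D) s t ((A₀ ++ [a]) ++ u :: (M ++ v :: Z))) :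
    ∃ l', DiPath (TCAdj D) s t l' ∧
      l'.length < ((A₀ ++ [a]) ++ u :: (M ++ v :: Z)).length ∧
      (∀ p ∈ listEdges l',
        p ∈ listEdges ((A₀ ++ [a]) ++ u :: (M ++ v :: Z)) ∨ p.2 = v) ∧
      (∀ x : V, (x,v) ∈ listEdges l' →
        (x,u) ∈ listEdges ((A₀ ++ [a]) ++ u :: (M ++ v :: Z))) ∧
      (∀ x : V, ¬ (x,u) ∈ listEdges l') := by
  obtain ⟨hchain, hnodup, hhead, hlast⟩ := hpath
  set A : List V := A₀ ++ [a] with hA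
  set R : List V := M ++ v :: Z with hR
  set l : List V := A ++ u :: R with hl
  refine ⟨A ++ v :: Z, ?_⟩
  -- nodup facts
  have hAne : A ≠ [] := by simp [hA]
  have dA : A.Disjoint (u :: R) := List.disjoint_of_nodup_append hnodup
  have huA : u ∉ A := fun h => dA h (by simp)
  have hvA : v ∉ A := fun h => dA h (by simp [hR])
  have hnodupR : (u :: R).Nodup := hnodup.of_append_right
  have huR : u ∉ R := (List.nodup_cons.mp hnodupR).1
  have hsubvZ : List.Sublist (v :: Z) (u :: R) :=
    List.Sublist.cons u (List.sublist_append_right M (v::Z))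
  have hnodvZ : (v :: Z).Nodup := hsubvZ.nodup hnodupR
  have hvZ : v ∉ Z := (List.nodup_cons.mp hnodvZ).1
  have huZ : u ∉ Z := fun h => huR (by simp [hR, h])
  have haA : a ∈ A := by simp [hA]
  have hau : a ≠ u := fun h => huA (h ▸ haA)
  have hav : a ≠ v := fun h => hvA (h ▸ haA)
  -- chain decomposition
  have hgA : A.getLast? = some a := by simp [hA]
  unfold List.Chain' at hchain
  rw [hl, List.isChain_append] at hchain
  obtain ⟨cA, cR, hj⟩ := hchain
  have hjau : TCAdj D a u := hj a hgA u rfl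
  -- reach from a to v
  have hreach : ReflTransGen (Adj D) a v :=
    ReflTransGen.trans hjau.2 (chain'_reflTransGen cR (by simp [hR]))
  -- chain' of v :: Z
  have cvZ : (v :: Z).Chain' (TCAdj D) := by
    have : ((u :: M) ++ v :: Z).Chain' (TCAdj D) := by
      simpa [hR, List.Chain'] using cR
    exact ((List.isChain_append).mp this).2.1
  constructor
  · -- DiPath
    refine ⟨?_, ?_, ?_, ?_⟩
    · unfold List.Chain'
      rw [List.isChain_append]
      refine ⟨cA, cvZ, ?_⟩
      intro x hx y hy
      rw [hgA] at hx
      rw [List.head?_cons] at hy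
      obtain rfl : a = x := Option.mem_some_iff.mp hx
      obtain rfl : v = y := Option.mem_some_iff.mp hy
      exact ⟨hav, hreach⟩
    · exact (List.Sublist.append_left hsubvZ A).nodup hnodup
    · obtain ⟨hd, hhd⟩ : ∃ hd, A.head? = some hd := by
        rw [hA]; cases A₀ <;> exact ⟨_, rfl⟩
      rw [hl, List.head?_append, hhd] at hhead
      rw [List.head?_append, hhd]
      simpa using hhead
    · have hgvZ : ∃ c, (v :: Z).getLast? = some c := ⟨_, List.getLast?_eq_getLast (l := v::Z) (by simp)⟩
      obtain ⟨c, hc⟩ := hgvZ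
      have h1 : (u :: R).getLast? = some c := by
        have : (u :: R) = (u :: M) ++ v :: Z := by simp [hR]
        rw [this, List.getLast?_append, hc]
        rfl
      rw [hl, List.getLast?_append, h1] at hlast
      rw [List.getLast?_append, hc]
      simpa using hlast
  refine ⟨?_, ?_, ?_, ?_⟩
  · simp [hl, hR]
  · -- edge containment
    intro p hp
    rw [hA, listEdges_concat_cons] at hp
    rcases List.mem_append.mp hp with hpA | hp2
    · left
      rw [hl, hA, listEdges_concat_cons]
      exact List.mem_append.mpr (Or.inl hpA)
    · rcases List.mem_cons.mp hp2 with rfl | hpZ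
      · right; rfl
      · left
        rw [hl, hA, listEdges_concat_cons]
        refine List.mem_append.mpr (Or.inr (List.mem_cons.mpr (Or.inr ?_)))
        have : listEdges (u :: R) = listEdges ((u::M) ++ [v]) ++ listEdges (v :: Z) := by
          rw [hR, show u :: (M ++ v :: Z) = (u :: M) ++ v :: Z by simp,
            listEdges_append_cons]
        rw [this]
        exact List.mem_append.mpr (Or.inr hpZ)
  · -- in-edges of v
    intro x hx
    rw [hA, listEdges_concat_cons] at hx
    rcases List.mem_append.mp hx with hpA | hp2
    · exact absurd (List.mem_of_mem_tail (mem_listEdges hpA).2) hvA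
    · rcases List.mem_cons.mp hp2 with heq | hpZ
      · have : x = a := congrArg Prod.fst heq
        subst this
        rw [hl, hA, listEdges_concat_cons]
        exact List.mem_append.mpr (Or.inr (List.mem_cons.mpr (Or.inl rfl)))
      · exact absurd (mem_listEdges hpZ).2 (by simpa using hvZ)
  · -- no in-edges of u
    intro x hx
    rw [hA, listEdges_concat_cons] at hx
    rcases List.mem_append.mp hx with hpA | hp2
    · exact huA (List.mem_of_mem_tail (mem_listEdges hpA).2)
    · rcases List.mem_cons.mp hp2 with heq | hpZ
      · have huv : u ≠ v := fun h => huR (h ▸ (by simp [hR] : v ∈ R))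
        exact huv (congrArg Prod.snd heq)
      · exact huZ (by simpa using (mem_listEdges hpZ).2)

/-- Symmetrized surgery lemma. -/
lemma master_surgery {D : Finset (V×V)} {s t u v : V} {l : List V}
    (hpath : DiPath (TCAdj D) s t l) (hu : u ∈ l) (hv : v ∈ l) (huv : u ≠ v)
    (hsu : s ≠ u) (hsv : s ≠ v) :
    ∃ l', DiPath (TCAdj D) s t l' ∧ l'.length < l.length ∧
      (∀ p ∈ listEdges l', p ∈ listEdges l ∨ p.2 = u ∨ p.2 = v) ∧
      (∀ x : V, (x,v) ∈ listEdges l' → (x,u) ∈ listEdges l) ∧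
      (∀ x : V, (x,u) ∈ listEdges l' → (x,v) ∈ listEdges l) := by
  obtain ⟨P, Ss, hPS⟩ := List.append_of_mem hu
  have hPne : P ≠ [] := by
    rintro rfl
    simp only [hPS, List.nil_append, List.head?_cons] at hpath
    exact hsu (Option.some_inj.mp hpath.2.2.1).symm
  rcases List.mem_append.mp (hPS ▸ hv) with hvP | hvS
  · -- v occurs before u : swap roles
    obtain ⟨A, M, hAM⟩ := List.append_of_mem hvP
    have hAne : A ≠ [] := by
      rintro rfl
      simp only [hPS, hAM, List.nil_append, List.head?_cons] at hpath
      exact hsv (Option.some_inj.mp hpath.2.2.1).symm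
    obtain ⟨A₀, a, rfl⟩ := (List.eq_nil_or_concat A).resolve_left hAne
    have hl : l = (A₀ ++ [a]) ++ v :: (M ++ u :: Ss) := by
      rw [hPS, hAM]; simp
    rw [hl] at hpath ⊢
    obtain ⟨l', h1, h2, h3, h4, h5⟩ := core_surgery hpath
    exact ⟨l', h1, h2,
      fun p hp => (h3 p hp).imp_right Or.inl,
      fun x hx => absurd hx (h5 x),
      fun x hx => h4 x hx⟩
  · have hvS' : v ∈ Ss := by
      rcases List.mem_cons.mp hvS with h | h
      · exact absurd h.symm huv
      · exact h
    obtain ⟨M, Z, hMZ⟩ := List.append_of_mem hvS'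
    obtain ⟨A₀, a, rfl⟩ := (List.eq_nil_or_concat P).resolve_left hPne
    have hl : l = (A₀ ++ [a]) ++ u :: (M ++ v :: Z) := by
      rw [hPS, hMZ]; simp
    rw [hl] at hpath ⊢
    obtain ⟨l', h1, h2, h3, h4, h5⟩ := core_surgery hpath
    exact ⟨l', h1, h2,
      fun p hp => (h3 p hp).imp_right Or.inr,
      fun x hx => h4 x hx,
      fun x hx => absurd hx (h5 x)⟩

def unionEdges (K : Finset (V × V)) (Q : V × V → List V) : Finset (V × V) :=
  K.biUnion fun k => (listEdges (Q k)).toFinset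

def GoodCover (D K : Finset (V × V)) (T : ℕ) (Q : V × V → List V) : Prop :=
  (∀ k ∈ K, DiPath (TCAdj D) k.1 k.2 (Q k)) ∧ ∀ x, outDeg (unionEdges K Q) x ≤ T

lemma mem_unionEdges {K : Finset (V × V)} {Q : V × V → List V} {p : V × V} :
    p ∈ unionEdges K Q ↔ ∃ k ∈ K, p ∈ listEdges (Q k) := by
  simp [unionEdges]

lemma good_exists {D K : Finset (V × V)} {T : ℕ} {H : Finset (V × V)}
    (hH : RSPPSolution D K T H) : ∃ Q, GoodCover D K T Q := by
  classical
  choose f hf using hH.2.2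
  refine ⟨fun k => if hk : k ∈ K then f k hk else [], ?_, ?_⟩
  · intro k hk
    simp only [dif_pos hk]
    obtain ⟨hc, hn, hh, hl⟩ := hf k hk
    exact ⟨hc.imp (fun a b hab => hH.1 (a,b) hab), hn, hh, hl⟩
  · intro x
    have hsub : unionEdges K (fun k => if hk : k ∈ K then f k hk else []) ⊆ H := by
      intro p hp
      obtain ⟨k, hk, hpk⟩ := mem_unionEdges.mp hp
      rw [dif_pos hk] at hpk
      have := (chain'_iff_listEdges.mp (hf k hk).1) p hpk
      simpa [Adj] using this
    calc outDeg _ x ≤ outDeg H x :=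
          Finset.card_le_card (Finset.filter_subset_filter _ hsub)
      _ ≤ T := hH.2.1 x
  
lemma good_to_solution {D K : Finset (V × V)} {T : ℕ} {Q : V × V → List V}
    (hQ : GoodCover D K T Q) : RSPPSolution D K T (unionEdges K Q) := by
  refine ⟨?_, hQ.2, ?_⟩
  · intro e he
    obtain ⟨k, hk, hek⟩ := mem_unionEdges.mp he
    exact (chain'_iff_listEdges.mp ((hQ.1 k hk).1)) e hek
  · intro k hk
    obtain ⟨hc, hn, hh, hl⟩ := hQ.1 k hk
    refine ⟨Q k, ?_, hn, hh, hl⟩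
    rw [chain'_iff_listEdges]
    intro p hp
    show (p.1, p.2) ∈ _
    rw [Prod.mk.eta]
    exact mem_unionEdges.mpr ⟨k, hk, hp⟩

lemma card_aux1 {α : Type*} [DecidableEq α] {F' F : Finset α} {pu pv : α}
    (hsub : ∀ q ∈ F', q ∈ F ∨ q = pu ∨ q = pv)
    (h2 : pv ∈ F' → pu ∈ F) (h3 : pu ∈ F' → pv ∈ F)
    (hpv' : pv ∈ F') (hpv : pv ∉ F) : F'.card ≤ F.card := by
  have hpuF : pu ∈ F := h2 hpv'
  have hpuF' : pu ∉ F' := fun h => hpv (h3 h)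
  have hss : F' ⊆ (insert pv F).erase pu := by
    intro q hq
    rw [Finset.mem_erase, Finset.mem_insert]
    refine ⟨fun hqq => hpuF' (hqq ▸ hq), ?_⟩
    rcases hsub q hq with h | rfl | rfl
    · exact Or.inr h
    · exact absurd hq hpuF'
    · exact Or.inl rfl
  calc F'.card ≤ ((insert pv F).erase pu).card := Finset.card_le_card hss
    _ = (insert pv F).card - 1 :=
        Finset.card_erase_of_mem (Finset.mem_insert_of_mem hpuF)
    _ = (F.card + 1) - 1 := by rw [Finset.card_insert_of_notMem hpv]
    _ = F.card := by omega

lemma card_aux {α : Type*} [DecidableEq α] {F' F : Finset α} {pu pv : α}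
    (hsub : ∀ q ∈ F', q ∈ F ∨ q = pu ∨ q = pv)
    (h2 : pv ∈ F' → pu ∈ F) (h3 : pu ∈ F' → pv ∈ F) : F'.card ≤ F.card := by
  by_cases hss : F' ⊆ F
  · exact Finset.card_le_card hss
  · obtain ⟨p, hpF', hpF⟩ := Finset.not_subset.mp hss
    rcases hsub p hpF' with h | rfl | rfl
    · exact absurd h hpF
    · exact card_aux1 (fun q hq => (hsub q hq).imp_right Or.symm) h3 h2 hpF' hpF
    · exact card_aux1 hsub h2 h3 hpF' hpF

lemma surgery_step {D K : Finset (V × V)} {T : ℕ} {Q : V × V → List V} {u v : V}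
    (hQ : GoodCover D K T Q) (huv : u ≠ v)
    (hfeq : K.filter (fun k => u ∈ Q k) = K.filter (fun k => v ∈ Q k))
    (hex : ∃ k ∈ K, u ∈ Q k)
    (hsrcu : ∀ k ∈ K, k.1 ≠ u) (hsrcv : ∀ k ∈ K, k.1 ≠ v) :
    ∃ Q' : V × V → List V, GoodCover D K T Q' ∧
      ∑ k ∈ K, (Q' k).length < ∑ k ∈ K, (Q k).length := by
  classical
  have hmemv : ∀ k, k ∈ K → u ∈ Q k → v ∈ Q k := by
    intro k hk hu
    have := Finset.ext_iff.mp hfeq k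
    simp only [Finset.mem_filter] at this
    exact (this.mp ⟨hk, hu⟩).2
  have hmemu : ∀ k, k ∈ K → v ∈ Q k → u ∈ Q k := by
    intro k hk hv
    have := Finset.ext_iff.mp hfeq k
    simp only [Finset.mem_filter] at this
    exact (this.mpr ⟨hk, hv⟩).2
  have key : ∀ k : V × V, ∃ l', (k ∈ K ∧ u ∈ Q k →
      (DiPath (TCAdj D) k.1 k.2 l' ∧ l'.length < (Q k).length ∧
      (∀ p ∈ listEdges l', p ∈ listEdges (Q k) ∨ p.2 = u ∨ p.2 = v) ∧
      (∀ x : V, (x,v) ∈ listEdges l' → (x,u) ∈ listEdges (Q k)) ∧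
      (∀ x : V, (x,u) ∈ listEdges l' → (x,v) ∈ listEdges (Q k)))) ∧
      (¬(k ∈ K ∧ u ∈ Q k) → l' = Q k) := by
    intro k
    by_cases hk : k ∈ K ∧ u ∈ Q k
    · obtain ⟨l', h⟩ := master_surgery (hQ.1 k hk.1) hk.2 (hmemv k hk.1 hk.2) huv
        (hsrcu k hk.1) (hsrcv k hk.1)
      exact ⟨l', fun _ => h, fun h' => absurd hk h'⟩
    · exact ⟨Q k, fun h => absurd h hk, fun _ => rfl⟩
  choose Q' hspec hid using key
  have claimA : ∀ p ∈ unionEdges K Q', p ∈ unionEdges K Q ∨ p.2 = u ∨ p.2 = v := by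
    intro p hp
    obtain ⟨k, hk, hpk⟩ := mem_unionEdges.mp hp
    by_cases hku : u ∈ Q k
    · rcases (hspec k ⟨hk, hku⟩).2.2.1 p hpk with h | h
      · exact Or.inl (mem_unionEdges.mpr ⟨k, hk, h⟩)
      · exact Or.inr h
    · rw [hid k (fun h => hku h.2)] at hpk
      exact Or.inl (mem_unionEdges.mpr ⟨k, hk, hpk⟩)
  have claimB : ∀ x, (x,v) ∈ unionEdges K Q' → (x,u) ∈ unionEdges K Q := by
    intro x hp
    obtain ⟨k, hk, hpk⟩ := mem_unionEdges.mp hp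
    by_cases hku : u ∈ Q k
    · exact mem_unionEdges.mpr ⟨k, hk, (hspec k ⟨hk, hku⟩).2.2.2.1 x hpk⟩
    · rw [hid k (fun h => hku h.2)] at hpk
      have : v ∈ Q k := List.mem_of_mem_tail (mem_listEdges hpk).2
      exact absurd (hmemu k hk this) hku
  have claimC : ∀ x, (x,u) ∈ unionEdges K Q' → (x,v) ∈ unionEdges K Q := by
    intro x hp
    obtain ⟨k, hk, hpk⟩ := mem_unionEdges.mp hp
    by_cases hku : u ∈ Q k
    · exact mem_unionEdges.mpr ⟨k, hk, (hspec k ⟨hk, hku⟩).2.2.2.2 x hpk⟩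
    · rw [hid k (fun h => hku h.2)] at hpk
      have : u ∈ Q k := List.mem_of_mem_tail (mem_listEdges hpk).2
      exact absurd this hku
  refine ⟨Q', ⟨?_, ?_⟩, ?_⟩
  · intro k hk
    by_cases hku : u ∈ Q k
    · exact (hspec k ⟨hk, hku⟩).1
    · rw [hid k (fun h => hku h.2)]
      exact hQ.1 k hk
  · intro x
    have hle : outDeg (unionEdges K Q') x ≤ outDeg (unionEdges K Q) x := by
      apply card_aux (pu := (x,u)) (pv := (x,v))
      · intro q hq
        rw [Finset.mem_filter] at hq
        rcases claimA q hq.1 with h | h | h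
        · exact Or.inl (Finset.mem_filter.mpr ⟨h, hq.2⟩)
        · refine Or.inr (Or.inl ?_)
          rw [← hq.2, ← h]
        · refine Or.inr (Or.inr ?_)
          rw [← hq.2, ← h]
      · intro h
        rw [Finset.mem_filter] at h ⊢
        exact ⟨claimB x h.1, rfl⟩
      · intro h
        rw [Finset.mem_filter] at h ⊢
        exact ⟨claimC x h.1, rfl⟩
    exact hle.trans (hQ.2 x)
  · obtain ⟨k0, hk0, hk0u⟩ := hex
    apply Finset.sum_lt_sum
    · intro k hk
      by_cases hku : u ∈ Q k
      · exact le_of_lt (hspec k ⟨hk, hku⟩).2.1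
      · rw [hid k (fun h => hku h.2)]
    · exact ⟨k0, hk0, (hspec k0 ⟨hk0, hk0u⟩).2.1⟩

/-- Every YES-instance `(D,K,T)` of MD-RSPP has a solution
path cover `Q` such that, writing `Q(v) = {κ ∈ K : v lies on Q κ}`, any two
distinct vertices `u, v` that each lie on at least one path of the cover and
are not the source of any commodity satisfy `Q(u) ≠ Q(v)`. -/
theorem mdrspp_distinct_types_cover {V : Type*} [Fintype V] [DecidableEq V]
    (D K : Finset (V × V)) (T : ℕ)
    (hD : IsDigraph D)
    (hyes : ∃ H : Finset (V × V), RSPPSolution D K T H) :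
    ∃ Q : V × V → List V,
      (∀ k ∈ K, DiPath (TCAdj D) k.1 k.2 (Q k)) ∧
      RSPPSolution D K T (K.biUnion fun k => (listEdges (Q k)).toFinset) ∧
      (∀ u v : V, u ≠ v →
        (∃ k ∈ K, u ∈ Q k) → (∃ k ∈ K, v ∈ Q k) →
        (∀ k ∈ K, k.1 ≠ u) → (∀ k ∈ K, k.1 ≠ v) →
        K.filter (fun k => u ∈ Q k) ≠ K.filter (fun k => v ∈ Q k)) := by
  classical
  obtain ⟨H, hH⟩ := hyes
  obtain ⟨Q0, hQ0⟩ := good_exists hH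
  set S : Set ℕ :=
    {n | ∃ Q : V × V → List V, GoodCover D K T Q ∧ ∑ k ∈ K, (Q k).length = n} with hS
  have hSne : S.Nonempty := ⟨_, Q0, hQ0, rfl⟩
  obtain ⟨Q, hQ, hQsum⟩ := Nat.sInf_mem hSne
  refine ⟨Q, hQ.1, good_to_solution hQ, ?_⟩
  intro u v huv hexu hexv hsrcu hsrcv hfeq
  obtain ⟨Q', hQ', hlt⟩ := surgery_step hQ huv hfeq hexu hsrcu hsrcv
  have hle : sInf S ≤ ∑ k ∈ K, (Q' k).length := Nat.sInf_le ⟨Q', hQ', rfl⟩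
  omega
end

section
/- Every YES-instance (D,F,K,T) of SMD-SPP has a solution path cover whose union contains at most 2^{|K|} + |K| distinct vertices. -/
open Relation

variable {V : Type*} [DecidableEq V]

/-- `H` is a solution graph of the SMD-SPP instance `(D,F,K,T)`: a subgraph of
`T(D)` such that every vertex outside the flexible set `F` has outdegree at
most `T`, and every routed commodity `(s,t,P) ∈ K` has a directed `s`-`t`-path
in `H ∩ T(P)`. -/
def SMDSolution (D : Finset (V × V)) (F : Finset V) (K : Finset (V × V × List V))
    (T : ℕ) (H : Finset (V × V)) : Prop :=
  (∀ e ∈ H, TCAdj D e.1 e.2) ∧ (∀ v, v ∉ F → outDeg H v ≤ T) ∧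
  (∀ k ∈ K, ∃ l, DiPath (Adj H) k.1 k.2.1 l ∧ l.Sublist k.2.2)

/-- The routed commodities in `K` are valid: for `(s,t,P) ∈ K`,
`P` is a directed `s`-`t`-path in `D`. -/
def ValidSPP (D : Finset (V × V)) (K : Finset (V × V × List V)) : Prop :=
  ∀ k ∈ K, DiPath (Adj D) k.1 k.2.1 k.2.2

section Auxiliary

set_option linter.unusedSectionVars false

lemma mem_listEdges_iff {l : List V} {x y : V} :
    (x, y) ∈ listEdges l ↔ ∃ i, l[i]? = some x ∧ l[i+1]? = some y := by
  induction l with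
  | nil => simp [listEdges]
  | cons a t ih =>
    cases t with
    | nil =>
      simp only [listEdges, List.tail_cons, List.zip_nil_right, List.not_mem_nil, false_iff]
      rintro ⟨i, h1, h2⟩
      rcases i with _ | i
      · simp at h2
      · simp at h1
    | cons b t' =>
      constructor
      · intro h
        have h' : (x,y) = (a,b) ∨ (x,y) ∈ listEdges (b :: t') := by
          simpa [listEdges] using h
        rcases h' with h' | h'
        · refine ⟨0, ?_, ?_⟩ <;> simp [Prod.ext_iff] at h' <;> simp [h'.1, h'.2]
        · obtain ⟨i, h1, h2⟩ := ih.1 h'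
          exact ⟨i+1, by simpa using h1, by simpa using h2⟩
      · rintro ⟨i, h1, h2⟩
        rcases i with _ | i
        · simp only [List.getElem?_cons_zero, Option.some.injEq] at h1
          simp only [List.getElem?_cons_succ, List.getElem?_cons_zero, Option.some.injEq] at h2
          subst h1; subst h2
          simp [listEdges]
        · have h' : (x,y) ∈ listEdges (b :: t') := ih.2 ⟨i, by simpa using h1, by simpa using h2⟩
          simp only [listEdges, List.tail_cons] at h' ⊢
          simp only [List.zip_cons_cons, List.mem_cons] at h' ⊢
          tauto

lemma edge_sublist {l : List V} {x y : V} (h : (x, y) ∈ listEdges l) : [x, y].Sublist l := by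
  induction l with
  | nil => simp [listEdges] at h
  | cons a t ih =>
    cases t with
    | nil => simp [listEdges] at h
    | cons b t' =>
      rcases (by simpa [listEdges] using h :
          (x,y) = (a, b) ∨ (x,y) ∈ listEdges (b :: t')) with h' | h'
      · rw [Prod.ext_iff] at h'
        obtain ⟨rfl, rfl⟩ := h'
        exact (List.nil_sublist t').cons₂ _ |>.cons₂ _
      · exact (ih h').cons _

lemma rtg_of_chain'_mem {R : V → V → Prop} {a y : V} {t : List V}
    (hc : (a :: t).Chain' R) (hy : y ∈ t) : Relation.ReflTransGen R a y := by
  induction t generalizing a with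
  | nil => simp at hy
  | cons b t' ih =>
    replace hc : R a b ∧ (b :: t').Chain' R := List.isChain_cons_cons.1 hc
    rcases List.mem_cons.1 hy with rfl | hy'
    · exact Relation.ReflTransGen.single hc.1
    · exact (Relation.ReflTransGen.single hc.1).trans (ih hc.2 hy')

lemma rtg_of_chain'_sublist {R : V → V → Prop} {l : List V} {x y : V}
    (hc : l.Chain' R) (hs : [x, y].Sublist l) : Relation.ReflTransGen R x y := by
  induction l with
  | nil => simp at hs
  | cons a t ih =>
    rcases hs with _ | _
    case cons h => exact ih hc.tail h
    case cons_cons h => exact rtg_of_chain'_mem hc (List.singleton_sublist.1 h)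

lemma edge_src_unique {l : List V} (hn : l.Nodup) {x y y' : V}
    (h1 : (x, y) ∈ listEdges l) (h2 : (x, y') ∈ listEdges l) : y = y' := by
  obtain ⟨i, hx, hy⟩ := mem_listEdges_iff.1 h1
  obtain ⟨i', hx', hy'⟩ := mem_listEdges_iff.1 h2
  have : i = i' := (List.getElem?_inj (List.getElem?_eq_some_iff.1 hx).1 hn).1 (by rw [hx, hx'])
  subst this
  rw [hy] at hy'
  exact (Option.some.injEq _ _ ▸ hy').symm ▸ rfl

lemma edge_tgt_unique {l : List V} (hn : l.Nodup) {x x' y : V}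
    (h1 : (x, y) ∈ listEdges l) (h2 : (x', y) ∈ listEdges l) : x = x' := by
  obtain ⟨i, hx, hy⟩ := mem_listEdges_iff.1 h1
  obtain ⟨i', hx', hy'⟩ := mem_listEdges_iff.1 h2
  have h : i + 1 = i' + 1 :=
    (List.getElem?_inj (List.getElem?_eq_some_iff.1 hy).1 hn).1 (by rw [hy, hy'])
  have : i = i' := by omega
  subst this
  rw [hx] at hx'
  simpa using hx'

lemma exists_in_edge {l : List V} {v s : V} (hv : v ∈ l) (hh : l.head? = some s) (hne : v ≠ s) :
    ∃ p, (p, v) ∈ listEdges l := by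
  induction l with
  | nil => simp at hv
  | cons a t ih =>
    simp only [List.head?_cons, Option.some.injEq] at hh
    subst hh
    rcases List.mem_cons.1 hv with rfl | hv'
    · exact absurd rfl hne
    · clear ih hv hne
      induction t generalizing a with
      | nil => simp at hv'
      | cons b t' ih2 =>
        rcases List.mem_cons.1 hv' with rfl | hv''
        · exact ⟨a, by simp [listEdges]⟩
        · obtain ⟨p, hp⟩ := ih2 b hv''
          refine ⟨p, ?_⟩
          simp only [listEdges, List.tail_cons, List.zip_cons_cons] at hp ⊢
          exact List.mem_cons_of_mem _ hp

lemma surgery_aux {l : List V} (hn : l.Nodup) {a b a' b' : V} {i j : ℕ} (hij : i < j)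
    (ha : l[i]? = some a) (hb : l[i+1]? = some b)
    (ha' : l[j]? = some a') (hb' : l[j+1]? = some b') :
    ∃ l', l'.Sublist l ∧ l'.head? = l.head? ∧ l'.getLast? = l.getLast? ∧
      l'.length < l.length ∧
      ∀ f ∈ listEdges l', (f ∈ listEdges l ∧ f ≠ (a,b) ∧ f ≠ (a',b')) ∨ f = (a,b') := by
  have hi1 : i + 1 < l.length := (List.getElem?_eq_some_iff.1 hb).1
  have hj1 : j + 1 < l.length := (List.getElem?_eq_some_iff.1 hb').1
  set l' := l.take (i+1) ++ l.drop (j+1) with hl'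
  have hAlen : (l.take (i+1)).length = i + 1 := by
    rw [List.length_take]; omega
  have hget : ∀ m, l'[m]? = if m < i+1 then l[m]? else l[m + (j - i)]? := by
    intro m
    by_cases hm : m < i + 1
    · rw [if_pos hm, hl', List.getElem?_append_left (by omega : m < (l.take (i+1)).length),
        List.getElem?_take_of_lt hm]
    · rw [if_neg hm, hl', List.getElem?_append_right (by omega : (l.take (i+1)).length ≤ m),
        List.getElem?_drop]
      congr 1
      omega
  have hsub : l'.Sublist l := by
    have hd : (l.drop (j+1)).Sublist (l.drop (i+1)) := by
      have h : l.drop (j+1) = (l.drop (i+1)).drop (j - i) := by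
        rw [List.drop_drop]; congr 1; omega
      rw [h]; exact List.drop_sublist _ _
    calc l'.Sublist (l.take (i+1) ++ l.drop (i+1)) := hd.append_left _
    _ = l := List.take_append_drop _ _
  have hhead : l'.head? = l.head? := by
    cases l with
    | nil => simp at ha
    | cons c t => simp [hl', List.take_succ_cons]
  have hdropne : l.drop (j+1) ≠ [] := by
    intro h
    have : l.length - (j+1) = 0 := by rw [← List.length_drop, h]; rfl
    omega
  have hlast : l'.getLast? = l.getLast? := by
    obtain ⟨v, hv⟩ : ∃ v, (l.drop (j+1)).getLast? = some v := by
      cases h : (l.drop (j+1)).getLast? with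
      | none => exact absurd (List.getLast?_eq_none_iff.1 h) hdropne
      | some v => exact ⟨v, rfl⟩
    rw [hl', List.getLast?_append, hv]
    conv_rhs => rw [← List.take_append_drop (j+1) l]
    rw [List.getLast?_append, hv]
    rfl
  have hlen : l'.length < l.length := by
    rw [hl', List.length_append, hAlen, List.length_drop]
    omega
  refine ⟨l', hsub, hhead, hlast, hlen, ?_⟩
  rintro ⟨x, y⟩ hf
  obtain ⟨m, hx, hy⟩ := mem_listEdges_iff.1 hf
  rw [hget] at hx hy
  by_cases hm1 : m + 1 < i + 1
  · rw [if_pos (by omega)] at hx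
    rw [if_pos hm1] at hy
    refine Or.inl ⟨mem_listEdges_iff.2 ⟨m, hx, hy⟩, ?_, ?_⟩
    · rintro h
      rw [Prod.mk.injEq] at h
      have : m = i := (List.getElem?_inj (by omega) hn).1 (by rw [hx, ha, h.1])
      omega
    · rintro h
      rw [Prod.mk.injEq] at h
      have : m = j := (List.getElem?_inj (by omega) hn).1 (by rw [hx, ha', h.1])
      omega
  · by_cases hm : m < i + 1
    · have hmi : m = i := by omega
      rw [if_pos hm, hmi, ha] at hx
      rw [if_neg hm1] at hy
      have h : i + 1 + (j - i) = j + 1 := by omega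
      rw [hmi, h, hb'] at hy
      right
      simp only [Option.some.injEq] at hx hy
      rw [Prod.mk.injEq]
      exact ⟨hx.symm, hy.symm⟩
    · rw [if_neg hm] at hx
      rw [if_neg (by omega)] at hy
      have hyy : l[(m + (j-i)) + 1]? = some y := by
        rw [← hy]; congr 1; omega
      refine Or.inl ⟨mem_listEdges_iff.2 ⟨m + (j - i), hx, hyy⟩, ?_, ?_⟩
      · rintro h
        rw [Prod.mk.injEq] at h
        have hbnd : m + (j - i) < l.length := (List.getElem?_eq_some_iff.1 hx).1
        have : m + (j - i) = i := (List.getElem?_inj hbnd hn).1 (by rw [hx, ha, h.1])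
        omega
      · rintro h
        rw [Prod.mk.injEq] at h
        have hbnd : m + (j - i) < l.length := (List.getElem?_eq_some_iff.1 hx).1
        have : m + (j - i) = j := (List.getElem?_inj hbnd hn).1 (by rw [hx, ha', h.1])
        omega

lemma surgery {l : List V} (hn : l.Nodup) {a b a' b' : V}
    (h1 : (a,b) ∈ listEdges l) (h2 : (a',b') ∈ listEdges l) (hne : (a,b) ≠ (a',b')) :
    ∃ l', l'.Sublist l ∧ l'.head? = l.head? ∧ l'.getLast? = l.getLast? ∧
      l'.length < l.length ∧
      ∀ f ∈ listEdges l',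
        (f ∈ listEdges l ∧ f ≠ (a,b) ∧ f ≠ (a',b')) ∨ f = (a,b') ∨ f = (a',b) := by
  obtain ⟨i, ha, hb⟩ := mem_listEdges_iff.1 h1
  obtain ⟨j, ha', hb'⟩ := mem_listEdges_iff.1 h2
  have hij : i ≠ j := by
    rintro rfl
    rw [ha] at ha'; rw [hb] at hb'
    simp only [Option.some.injEq] at ha' hb'
    exact hne (by rw [ha', hb'])
  rcases lt_or_gt_of_ne hij with h | h
  · obtain ⟨l', s, hh, hl, hlen, he⟩ := surgery_aux hn h ha hb ha' hb'
    exact ⟨l', s, hh, hl, hlen, fun f hf => by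
      rcases he f hf with h' | h'
      exacts [Or.inl h', Or.inr (Or.inl h')]⟩
  · obtain ⟨l', s, hh, hl, hlen, he⟩ := surgery_aux hn h ha' hb' ha hb
    exact ⟨l', s, hh, hl, hlen, fun f hf => by
      rcases he f hf with ⟨g1, g2, g3⟩ | h'
      exacts [Or.inl ⟨g1, g3, g2⟩, Or.inr (Or.inr h')]⟩

end Auxiliary

/-- Every YES-instance `(D,F,K,T)` of SMD-SPP has a solution
path cover (a family `Q` of witness paths, one per routed commodity `(s,t,P)`:
a directed `s`-`t`-path in `T(P)`, i.e. a sublist of `P` from `s` to `t`, whose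
union is a solution graph) whose union contains at most `2^|K| + |K|` distinct
vertices. -/
theorem smdspp_small_solution_path_cover {V : Type*} [Fintype V] [DecidableEq V]
    (D : Finset (V × V)) (F : Finset V) (K : Finset (V × V × List V)) (T : ℕ)
    (hD : IsDigraph D) (hKvalid : ValidSPP D K)
    (hyes : ∃ H : Finset (V × V), SMDSolution D F K T H) :
    ∃ Q : V × V × List V → List V,
      (∀ k ∈ K, (Q k).Sublist k.2.2 ∧ (Q k).head? = some k.1 ∧
        (Q k).getLast? = some k.2.1) ∧
      SMDSolution D F K T (K.biUnion fun k => (listEdges (Q k)).toFinset) ∧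
      (K.biUnion fun k => (Q k).toFinset).card ≤ 2 ^ K.card + K.card := by
  classical
  obtain ⟨H, hH1, hH2, hH3⟩ := hyes
  -- the notion of a valid cover
  set good : ((V × V × List V) → List V) → Prop := fun Q =>
    (∀ k ∈ K, (Q k).Sublist k.2.2 ∧ (Q k).head? = some k.1 ∧
      (Q k).getLast? = some k.2.1) ∧
    (∀ v, v ∉ F → outDeg (K.biUnion fun k => (listEdges (Q k)).toFinset) v ≤ T) with hgood
  -- initial cover from the witness paths in H
  have hgood0 : ∃ Q, good Q := by
    refine ⟨fun k => if h : k ∈ K then (hH3 k h).choose else [], ?_, ?_⟩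
    · intro k hk
      obtain ⟨⟨_, _, hh, hl⟩, hs⟩ := (hH3 k hk).choose_spec
      simp only [dif_pos hk]
      exact ⟨hs, hh, hl⟩
    · intro v hv
      refine le_trans (Finset.card_le_card (Finset.filter_subset_filter _ ?_)) (hH2 v hv)
      intro e he
      obtain ⟨k, hk, hek⟩ := Finset.mem_biUnion.1 he
      rw [List.mem_toFinset] at hek
      simp only [dif_pos hk] at hek
      obtain ⟨⟨hchain, _, _, _⟩, _⟩ := (hH3 k hk).choose_spec
      have := chain'_iff_listEdges.1 hchain e hek
      simpa [Adj] using this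
  -- take a cover of minimum total length
  have hne0 : {n | ∃ Q, good Q ∧ (∑ k ∈ K, (Q k).length) = n}.Nonempty := by
    obtain ⟨Q0, h0⟩ := hgood0
    exact ⟨_, Q0, h0, rfl⟩
  obtain ⟨Q, hQ, hQm⟩ := Nat.sInf_mem hne0
  have hmin : ∀ Q', good Q' → (∑ k ∈ K, (Q k).length) ≤ ∑ k ∈ K, (Q' k).length := by
    intro Q' h'
    rw [hQm]
    exact Nat.sInf_le ⟨Q', h', rfl⟩
  set U : Finset (V × V) := K.biUnion fun k => (listEdges (Q k)).toFinset with hUdef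
  have hnodup : ∀ k ∈ K, (Q k).Nodup :=
    fun k hk => ((hQ.1 k hk).1).nodup (hKvalid k hk).2.1
  -- key: distinct edges of U have distinct usage sets
  have key : ∀ e ∈ U, ∀ e' ∈ U, e ≠ e' →
      (K.filter fun k => e ∈ listEdges (Q k)) ≠ (K.filter fun k => e' ∈ listEdges (Q k)) := by
    rintro ⟨a, b⟩ he ⟨a', b'⟩ he' hnee hSS
    set S := K.filter fun k => (a, b) ∈ listEdges (Q k) with hSdef
    obtain ⟨k₀, hk₀K, hk₀e⟩ := Finset.mem_biUnion.1 he
    rw [List.mem_toFinset] at hk₀e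
    have hk₀S : k₀ ∈ S := Finset.mem_filter.2 ⟨hk₀K, hk₀e⟩
    have hboth : ∀ k ∈ S, (a,b) ∈ listEdges (Q k) ∧ (a',b') ∈ listEdges (Q k) := by
      intro k hk
      refine ⟨(Finset.mem_filter.1 hk).2, ?_⟩
      have hk' : k ∈ K.filter fun k => (a',b') ∈ listEdges (Q k) := hSS ▸ hk
      exact (Finset.mem_filter.1 hk').2
    have haa : a ≠ a' := by
      rintro rfl
      exact hnee (by rw [edge_src_unique (hnodup k₀ hk₀K) (hboth k₀ hk₀S).1 (hboth k₀ hk₀S).2])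
    have hbb : b ≠ b' := by
      rintro rfl
      exact hnee (by rw [edge_tgt_unique (hnodup k₀ hk₀K) (hboth k₀ hk₀S).1 (hboth k₀ hk₀S).2])
    -- per-path surgeries
    have hsurg : ∀ k ∈ S, ∃ l', l'.Sublist (Q k) ∧ l'.head? = (Q k).head? ∧
        l'.getLast? = (Q k).getLast? ∧ l'.length < (Q k).length ∧
        ∀ f ∈ listEdges l', (f ∈ listEdges (Q k) ∧ f ≠ (a,b) ∧ f ≠ (a',b')) ∨
          f = (a,b') ∨ f = (a',b) := by
      intro k hk
      exact surgery (hnodup k (Finset.mem_filter.1 hk).1) (hboth k hk).1 (hboth k hk).2 hnee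
    choose fS hfS using hsurg
    set Q2 : (V × V × List V) → List V := fun k => if h : k ∈ S then fS k h else Q k with hQ2def
    have hQ2S : ∀ k (h : k ∈ S), Q2 k = fS k h := by
      intro k h; rw [hQ2def]; simp only [dif_pos h]
    have hQ2nS : ∀ k, k ∉ S → Q2 k = Q k := by
      intro k h; rw [hQ2def]; simp only [dif_neg h]
    set U2 : Finset (V × V) := K.biUnion fun k => (listEdges (Q2 k)).toFinset with hU2def
    -- edge classification of the new union
    have hU2sub : ∀ g ∈ U2, (g ∈ U ∧ g ≠ (a,b) ∧ g ≠ (a',b')) ∨ g = (a,b') ∨ g = (a',b) := by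
      intro g hg
      obtain ⟨k, hkK, hgk⟩ := Finset.mem_biUnion.1 hg
      rw [List.mem_toFinset] at hgk
      by_cases hk : k ∈ S
      · rw [hQ2S k hk] at hgk
        rcases (hfS k hk).2.2.2.2 g hgk with ⟨h1, h2, h3⟩ | h | h
        · exact Or.inl ⟨Finset.mem_biUnion.2 ⟨k, hkK, List.mem_toFinset.2 h1⟩, h2, h3⟩
        · exact Or.inr (Or.inl h)
        · exact Or.inr (Or.inr h)
      · rw [hQ2nS k hk] at hgk
        refine Or.inl ⟨Finset.mem_biUnion.2 ⟨k, hkK, List.mem_toFinset.2 hgk⟩, ?_, ?_⟩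
        · rintro rfl
          exact hk (Finset.mem_filter.2 ⟨hkK, hgk⟩)
        · rintro rfl
          exact hk (hSS ▸ Finset.mem_filter.2 ⟨hkK, hgk⟩)
    -- degree does not increase
    have hdeg2 : ∀ v, v ∉ F → outDeg U2 v ≤ T := by
      intro v hv
      refine le_trans ?_ (hQ.2 v hv)
      unfold outDeg
      by_cases hva : v = a
      · subst hva
        have hmem : (v, b) ∈ U.filter fun e => e.1 = v := Finset.mem_filter.2 ⟨he, rfl⟩
        calc (U2.filter fun e => e.1 = v).card
            ≤ (insert (v, b') ((U.filter fun e => e.1 = v).erase (v, b))).card := by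
              apply Finset.card_le_card
              intro g hg
              obtain ⟨hgU2, hg1⟩ := Finset.mem_filter.1 hg
              rcases hU2sub g hgU2 with ⟨h1, h2, _⟩ | rfl | rfl
              · exact Finset.mem_insert_of_mem
                  (Finset.mem_erase.2 ⟨by rw [← hg1] at h2 ⊢; exact h2, Finset.mem_filter.2 ⟨h1, hg1⟩⟩)
              · exact Finset.mem_insert_self _ _
              · exact absurd hg1 (by simpa using haa.symm)
          _ ≤ ((U.filter fun e => e.1 = v).erase (v, b)).card + 1 := Finset.card_insert_le _ _
          _ = (U.filter fun e => e.1 = v).card - 1 + 1 := by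
              rw [Finset.card_erase_of_mem hmem]
          _ ≤ (U.filter fun e => e.1 = v).card :=
              le_of_eq (Nat.sub_add_cancel (Finset.card_pos.2 ⟨_, hmem⟩))
      · by_cases hva' : v = a'
        · subst hva'
          have hmem : (v, b') ∈ U.filter fun e => e.1 = v := Finset.mem_filter.2 ⟨he', rfl⟩
          calc (U2.filter fun e => e.1 = v).card
              ≤ (insert (v, b) ((U.filter fun e => e.1 = v).erase (v, b'))).card := by
                apply Finset.card_le_card
                intro g hg
                obtain ⟨hgU2, hg1⟩ := Finset.mem_filter.1 hg
                rcases hU2sub g hgU2 with ⟨h1, _, h3⟩ | rfl | rfl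
                · exact Finset.mem_insert_of_mem
                    (Finset.mem_erase.2 ⟨by rw [← hg1] at h3 ⊢; exact h3, Finset.mem_filter.2 ⟨h1, hg1⟩⟩)
                · exact absurd hg1 (by simpa using haa)
                · exact Finset.mem_insert_self _ _
            _ ≤ ((U.filter fun e => e.1 = v).erase (v, b')).card + 1 := Finset.card_insert_le _ _
            _ = (U.filter fun e => e.1 = v).card - 1 + 1 := by
                rw [Finset.card_erase_of_mem hmem]
            _ ≤ (U.filter fun e => e.1 = v).card :=
                le_of_eq (Nat.sub_add_cancel (Finset.card_pos.2 ⟨_, hmem⟩))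
        · apply Finset.card_le_card
          intro g hg
          obtain ⟨hgU2, hg1⟩ := Finset.mem_filter.1 hg
          rcases hU2sub g hgU2 with ⟨h1, _, _⟩ | rfl | rfl
          · exact Finset.mem_filter.2 ⟨h1, hg1⟩
          · exact absurd hg1 (by simpa using (Ne.symm hva))
          · exact absurd hg1 (by simpa using (Ne.symm hva'))
    -- the new cover is good
    have hgood2 : good Q2 := by
      refine ⟨?_, hdeg2⟩
      intro k hk
      by_cases h : k ∈ S
      · rw [hQ2S k h]
        obtain ⟨hs, hh, hl, _, _⟩ := hfS k h
        obtain ⟨hs0, hh0, hl0⟩ := hQ.1 k hk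
        exact ⟨hs.trans hs0, by rw [hh, hh0], by rw [hl, hl0]⟩
      · rw [hQ2nS k h]
        exact hQ.1 k hk
    -- but it is strictly shorter
    have hlt : (∑ k ∈ K, (Q2 k).length) < ∑ k ∈ K, (Q k).length := by
      apply Finset.sum_lt_sum
      · intro k hk
        by_cases h : k ∈ S
        · rw [hQ2S k h]; exact le_of_lt (hfS k h).2.2.2.1
        · rw [hQ2nS k h]
      · exact ⟨k₀, hk₀K, by rw [hQ2S k₀ hk₀S]; exact (hfS k₀ hk₀S).2.2.2.1⟩
    exact absurd (hmin Q2 hgood2) (Nat.not_le.2 hlt)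
  -- assemble the result
  refine ⟨Q, hQ.1, ⟨?_, hQ.2, ?_⟩, ?_⟩
  · -- edges of the union are in the transitive closure of D
    rintro ⟨x, y⟩ he
    obtain ⟨k, hkK, hek⟩ := Finset.mem_biUnion.1 he
    rw [List.mem_toFinset] at hek
    have hsub : [x, y].Sublist k.2.2 := (edge_sublist hek).trans ((hQ.1 k hkK).1)
    obtain ⟨hchain, hnodupP, _, _⟩ := hKvalid k hkK
    constructor
    · have h2 : ([x, y] : List V).Nodup := hsub.nodup hnodupP
      simpa using h2
    · exact rtg_of_chain'_sublist hchain hsub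
  · -- witness paths
    intro k hk
    refine ⟨Q k, ⟨?_, hnodup k hk, (hQ.1 k hk).2.1, (hQ.1 k hk).2.2⟩, (hQ.1 k hk).1⟩
    rw [chain'_iff_listEdges]
    intro p hp
    show (p.1, p.2) ∈ U
    rw [Prod.mk.eta]
    exact Finset.mem_biUnion.2 ⟨k, hk, List.mem_toFinset.2 hp⟩
  · -- cardinality bound
    have hsubV : (K.biUnion fun k => (Q k).toFinset) ⊆
        (K.image fun k => k.1) ∪ (U.image Prod.snd) := by
      intro v hv
      obtain ⟨k, hkK, hvk⟩ := Finset.mem_biUnion.1 hv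
      rw [List.mem_toFinset] at hvk
      by_cases hvs : v = k.1
      · exact Finset.mem_union_left _ (Finset.mem_image.2 ⟨k, hkK, hvs.symm⟩)
      · obtain ⟨p, hp⟩ := exists_in_edge hvk (hQ.1 k hkK).2.1 hvs
        exact Finset.mem_union_right _ (Finset.mem_image.2
          ⟨(p, v), Finset.mem_biUnion.2 ⟨k, hkK, List.mem_toFinset.2 hp⟩, rfl⟩)
    have hcardU : U.card ≤ 2 ^ K.card - 1 := by
      have hinj : U.card ≤ (K.powerset.erase ∅).card := by
        apply Finset.card_le_card_of_injOn (fun e => K.filter fun k => e ∈ listEdges (Q k))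
        · intro e he
          refine Finset.mem_erase.2 ⟨?_, Finset.mem_powerset.2 (Finset.filter_subset _ _)⟩
          obtain ⟨k, hkK, hek⟩ := Finset.mem_biUnion.1 he
          exact Finset.ne_empty_of_mem (Finset.mem_filter.2 ⟨hkK, List.mem_toFinset.1 hek⟩)
        · intro e he e' he' hee
          by_contra hnee
          exact key e he e' he' hnee hee
      rwa [Finset.card_erase_of_mem (Finset.mem_powerset.2 (Finset.empty_subset _)),
        Finset.card_powerset] at hinj
    calc (K.biUnion fun k => (Q k).toFinset).card
        ≤ ((K.image fun k => k.1) ∪ (U.image Prod.snd)).card := Finset.card_le_card hsubV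
      _ ≤ (K.image fun k => k.1).card + (U.image Prod.snd).card := Finset.card_union_le _ _
      _ ≤ K.card + U.card := add_le_add Finset.card_image_le Finset.card_image_le
      _ ≤ K.card + (2 ^ K.card - 1) := Nat.add_le_add_left hcardU K.card
      _ ≤ 2 ^ K.card + K.card := by
          rw [Nat.add_comm]
          exact Nat.add_le_add_right (Nat.sub_le _ _) _
end
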